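/- A real Banach space X is LUR if and only if for every x ∈ X \ {0}, diam(Q_{S_X}(x, 1/n)) → 0 as n → ∞, where Q_{S_X}(x,δ) = {y ∈ S_X : ‖x−y‖ ≥ 1+‖x‖−δ}. -/

import Mathlib

open Filter Topology

/-- δ-almost farthest points of the unit sphere from `x`, using `r(S_X, x) = 1 + ‖x‖`. -/
def QS {X : Type*} [NormedAddCommGroup X] (x : X) (δ : ℝ) : Set X :=
  {y | ‖y‖ = 1 ∧ 1 + ‖x‖ - δ ≤ ‖x - y‖}

lemma QS_bounded {X : Type*} [NormedAddCommGroup X] (x : X) (δ : ℝ) :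
    Bornology.IsBounded (QS x δ) := by
  apply (Metric.isBounded_sphere (x := (0:X)) (r := 1)).subset
  intro y hy
  simpa [Metric.mem_sphere, dist_eq_norm] using hy.1

lemma QS_key {X : Type*} [NormedAddCommGroup X] [NormedSpace ℝ X]
    {x y : X} {δ : ℝ} (hx : x ≠ 0) (hy : y ∈ QS x δ) :
    2 - δ / min ‖x‖ 1 ≤ ‖y + -(‖x‖⁻¹ • x)‖ := by
  set a : ℝ := ‖x‖ with ha
  have ha0 : 0 < a := norm_pos_iff.mpr hx
  set u : X := -(‖x‖⁻¹ • x) with hu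
  have hau : a • u = -x := by
    rw [hu, smul_neg, smul_smul, mul_inv_cancel₀ (ne_of_gt ha0), one_smul]
  have hxy : ‖y + a • u‖ = ‖x - y‖ := by
    rw [hau]; rw [show y + -x = -(x - y) by abel, norm_neg]
  have hbig : 1 + a - δ ≤ ‖y + a • u‖ := by rw [hxy]; exact hy.2
  have hnu : ‖u‖ = 1 := by
    rw [hu, norm_neg, norm_smul, norm_inv, norm_norm, inv_mul_cancel₀ (ne_of_gt ha0)]
  rcases le_total 1 a with h1a | ha1
  · have hm : min a 1 = 1 := min_eq_right h1a
    rw [hm, div_one]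
    have : ‖y + u‖ = ‖(y + a • u) - (a - 1) • u‖ := by
      congr 1
      rw [sub_smul, one_smul]; abel
    rw [this] at *
    calc 2 - δ ≤ (1 + a - δ) - ‖(a - 1) • u‖ := by
          rw [norm_smul, hnu, mul_one, Real.norm_eq_abs, abs_of_nonneg (by linarith)]
          linarith
      _ ≤ ‖y + a • u‖ - ‖(a - 1) • u‖ := by linarith
      _ ≤ ‖(y + a • u) - (a - 1) • u‖ := by
          have := norm_sub_norm_le (y + a • u) ((a - 1) • u)
          linarith [norm_sub_rev (y + a • u) ((a-1) • u)]
  · have hm : min a 1 = a := min_eq_left ha1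
    rw [hm]
    have hyn : ‖y‖ = 1 := hy.1
    have key : a * ‖y + u‖ ≥ 2 * a - δ := by
      have h1 : a • (y + u) = (y + a • u) - (1 - a) • y := by
        rw [smul_add, sub_smul, one_smul]; abel
      have h2 : ‖a • (y + u)‖ = a * ‖y + u‖ := by
        rw [norm_smul, Real.norm_eq_abs, abs_of_pos ha0]
      have h3 : ‖(1 - a) • y‖ = 1 - a := by
        rw [norm_smul, hyn, mul_one, Real.norm_eq_abs, abs_of_nonneg (by linarith)]
      have h4 := norm_sub_norm_le (y + a • u) ((1 - a) • y)
      rw [← h1, h2, h3] at h4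
      linarith
    rw [ge_iff_le, ← sub_nonneg] at key
    rw [← sub_nonneg]
    have : ‖y + u‖ - (2 - δ / a) = (a * ‖y + u‖ - (2 * a - δ)) / a := by
      field_simp
    rw [this]
    positivity

lemma QS_half {X : Type*} [NormedAddCommGroup X] [NormedSpace ℝ X]
    {x y : X} {δ : ℝ} (hx : x ≠ 0) (hy : y ∈ QS x δ) :
    1 - δ / (2 * min ‖x‖ 1) ≤ ‖(1 / 2 : ℝ) • (y + -(‖x‖⁻¹ • x))‖ := by
  have h := QS_key hx hy
  have hm : 0 < min ‖x‖ 1 := lt_min (norm_pos_iff.mpr hx) one_pos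
  rw [norm_smul]
  have : ‖(1/2 : ℝ)‖ = 1/2 := by norm_num [Real.norm_eq_abs]
  rw [this]
  have : δ / (2 * min ‖x‖ 1) = δ / min ‖x‖ 1 / 2 := by rw [div_div, mul_comm]
  rw [this]
  linarith

theorem stmt17 {X : Type*} [NormedAddCommGroup X] [NormedSpace ℝ X] [CompleteSpace X] :
    (∀ (x : X) (xn : ℕ → X), ‖x‖ = 1 → (∀ n, ‖xn n‖ = 1) →
        Tendsto (fun n => ‖(1 / 2 : ℝ) • (xn n + x)‖) atTop (𝓝 1) →
        Tendsto xn atTop (𝓝 x)) ↔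
      ∀ x : X, x ≠ 0 →
        Tendsto (fun n : ℕ => Metric.diam (QS x (1 / n))) atTop (𝓝 0) := by
  constructor
  · intro h x hx
    by_contra hcon
    -- extract ε and a subsequence where the diameter stays ≥ ε
    have hfreq : ∃ ε > 0, ∃ᶠ n : ℕ in atTop, ε ≤ Metric.diam (QS x (1 / n)) := by
      by_contra hfe
      push_neg at hfe
      apply hcon
      rw [Metric.tendsto_atTop]
      intro ε hε
      have := hfe (ε/2) (by linarith)
      rw [Filter.eventually_atTop] at this
      obtain ⟨N, hN⟩ := this
      refine ⟨N, fun n hn => ?_⟩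
      have h1 := hN n hn
      have h2 : (0:ℝ) ≤ Metric.diam (QS x (1 / n)) := Metric.diam_nonneg
      rw [Real.dist_eq, abs_of_nonneg (by linarith)]
      linarith
    obtain ⟨ε, hε, hfr⟩ := hfreq
    obtain ⟨φ, hφ, hφP⟩ := Filter.extraction_of_frequently_atTop hfr
    -- pick two far-apart points in each QS x (1/φ k)
    have hpts : ∀ k : ℕ, ∃ y ∈ QS x (1 / (φ k : ℕ)), ∃ z ∈ QS x (1 / (φ k)), ε / 2 < dist y z := by
      intro k
      by_contra hc
      push_neg at hc
      have : Metric.diam (QS x (1 / (φ k))) ≤ ε / 2 :=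
        Metric.diam_le_of_forall_dist_le (by linarith) (fun y hy z hz => hc y hy z hz)
      have := hφP k
      linarith
    choose y hy z hz hd using hpts
    set u : X := -(‖x‖⁻¹ • x) with hu
    have hnu : ‖u‖ = 1 := by
      rw [hu, norm_neg, norm_smul, norm_inv, norm_norm,
        inv_mul_cancel₀ (ne_of_gt (norm_pos_iff.mpr hx))]
    have hm : 0 < min ‖x‖ 1 := lt_min (norm_pos_iff.mpr hx) one_pos
    -- the squeeze: both sequences converge to u
    have hδ0 : Tendsto (fun k => (1 : ℝ) / (φ k : ℕ)) atTop (𝓝 0) :=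
      tendsto_one_div_atTop_nhds_zero_nat.comp hφ.tendsto_atTop
    have hlow : Tendsto (fun k => 1 - (1 / (φ k : ℕ)) / (2 * min ‖x‖ 1)) atTop (𝓝 1) := by
      have : Tendsto (fun k => (1 / (φ k : ℕ) : ℝ) / (2 * min ‖x‖ 1)) atTop (𝓝 0) := by
        simpa using hδ0.div_const (2 * min ‖x‖ 1)
      simpa using (tendsto_const_nhds (x := (1:ℝ))).sub this
    have hconv : ∀ (w : ℕ → X), (∀ k, w k ∈ QS x (1 / (φ k))) → Tendsto w atTop (𝓝 u) := by
      intro w hw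
      apply h u w hnu (fun k => (hw k).1)
      apply tendsto_of_tendsto_of_tendsto_of_le_of_le hlow tendsto_const_nhds
      · intro k
        exact QS_half hx (hw k)
      · intro k
        have h1 : ‖(1 / 2 : ℝ) • (w k + u)‖ ≤ (1/2) * (‖w k‖ + ‖u‖) := by
          rw [norm_smul]
          have : ‖(1/2 : ℝ)‖ = 1/2 := by norm_num [Real.norm_eq_abs]
          rw [this]
          have := norm_add_le (w k) u
          nlinarith
        rw [(hw k).1, hnu] at h1
        linarith
    have hyc := hconv y hy
    have hzc := hconv z hz
    have hdist : Tendsto (fun k => dist (y k) (z k)) atTop (𝓝 0) := by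
      have := hyc.sub hzc
      rw [sub_self] at this
      simpa [dist_eq_norm, Function.comp_def] using (continuous_norm.tendsto 0).comp this
    have : ε / 2 ≤ 0 := le_of_tendsto_of_tendsto' tendsto_const_nhds hdist (fun k => (hd k).le)
    linarith
  · intro h x xn hx hxn htend
    have hx0 : x ≠ 0 := fun h0 => by simp [h0] at hx
    rw [Metric.tendsto_nhds]
    intro ε hε
    have hnx : (-x : X) ≠ 0 := neg_ne_zero.mpr hx0
    have hdiam := h (-x) hnx
    have hev : ∀ᶠ n : ℕ in atTop, Metric.diam (QS (-x) (1 / n)) < ε :=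
      hdiam.eventually (gt_mem_nhds hε)
    obtain ⟨N, hN1, hNd⟩ := ((eventually_ge_atTop 1).and hev).exists
    set δ : ℝ := 1 / (N : ℕ) with hδ
    have hδpos : 0 < δ := by
      rw [hδ]
      positivity -- need N > 0
    have hxmem : x ∈ QS (-x) δ := by
      constructor
      · exact hx
      · rw [norm_neg, hx]
        have h2 : ‖(-x) - x‖ = 2 := by
          rw [show (-x) - x = -((2:ℝ) • x) by rw [two_smul]; abel, norm_neg, norm_smul, hx]
          norm_num
        rw [h2]; linarith
    have hev2 : ∀ᶠ m : ℕ in atTop, 1 - δ / 2 < ‖(1 / 2 : ℝ) • (xn m + x)‖ :=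
      htend.eventually (lt_mem_nhds (by linarith))
    filter_upwards [hev2] with m hm
    have hmem : xn m ∈ QS (-x) δ := by
      refine ⟨hxn m, ?_⟩
      rw [norm_neg, hx]
      have h1 : ‖(1 / 2 : ℝ) • (xn m + x)‖ = (1/2) * ‖xn m + x‖ := by
        rw [norm_smul]; norm_num [Real.norm_eq_abs]
      rw [h1] at hm
      have h2 : (-x) - xn m = -(xn m + x) := by abel
      rw [h2, norm_neg]
      linarith
    calc dist (xn m) x ≤ Metric.diam (QS (-x) δ) :=
          Metric.dist_le_diam_of_mem (QS_bounded _ _) hmem hxmem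
      _ < ε := hNd
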